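/- The point w = (1/4, 1/4, 1/2, 1/4, 1/4, 1/2) ∈ ℝ⁶ belongs to C₃, but there is no x ∈ [0,1]³ with φ(x) = w; hence C₃ is not contained in φ([0,1]³). -/

import Mathlib

/-- The map `φ : ℝ³ → ℝ⁶` of primary variables. -/
noncomputable def phi (x : Fin 3 → ℝ) : Fin 6 → ℝ :=
  ![(x 0 + 2 * x 0 * x 1 + x 1) / 2,
    (x 0 + 2 * x 0 * x 2 + x 2) / 2,
    (x 1 + 2 * x 1 * x 2 + x 2) / 2,
    (x 0 - 2 * x 0 * x 1 + x 1) / 2,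
    (x 0 - 2 * x 0 * x 2 + x 2) / 2,
    (x 1 - 2 * x 1 * x 2 + x 2) / 2]

/-- The solid cube `H₃ = [0,1]³`. -/
def H3 : Set (Fin 3 → ℝ) := {x | ∀ i, x i ∈ Set.Icc (0 : ℝ) 1}

/-- `C₃`, the convex hull of the images under `φ` of the binary vertices. -/
noncomputable def C3 : Set (Fin 6 → ℝ) :=
  convexHull ℝ (phi '' {p : Fin 3 → ℝ | ∀ i, p i = 0 ∨ p i = 1})

theorem C3_not_subset_phi_image :
    (![1 / 4, 1 / 4, 1 / 2, 1 / 4, 1 / 4, 1 / 2] : Fin 6 → ℝ) ∈ C3 ∧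
    (¬ ∃ x ∈ H3, phi x = ![1 / 4, 1 / 4, 1 / 2, 1 / 4, 1 / 4, 1 / 2]) ∧
    ¬ C3 ⊆ phi '' H3 := by
  have hmem : (![1 / 4, 1 / 4, 1 / 2, 1 / 4, 1 / 4, 1 / 2] : Fin 6 → ℝ) ∈ C3 := by
    have h1 : phi ![0, 0, 1] ∈ C3 := by
      apply subset_convexHull
      exact ⟨![0, 0, 1], by intro i; fin_cases i <;> simp, rfl⟩
    have h2 : phi ![0, 1, 0] ∈ C3 := by
      apply subset_convexHull
      exact ⟨![0, 1, 0], by intro i; fin_cases i <;> simp, rfl⟩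
    have hc : Convex ℝ C3 := convex_convexHull ℝ _
    have := hc h1 h2 (by norm_num : (0:ℝ) ≤ 1/2) (by norm_num : (0:ℝ) ≤ 1/2)
      (by norm_num : (1:ℝ)/2 + 1/2 = 1)
    convert this using 1
    funext i
    fin_cases i <;> norm_num [phi, Matrix.cons_val_succ, Matrix.cons_val_zero, Matrix.cons_val_two, Matrix.cons_val_one, Matrix.head_cons, Matrix.tail_cons]
  have hno : ¬ ∃ x ∈ H3, phi x = ![1 / 4, 1 / 4, 1 / 2, 1 / 4, 1 / 4, 1 / 2] := by
    rintro ⟨x, _, h⟩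
    have h0 : (x 0 + 2 * x 0 * x 1 + x 1) / 2 = 1/4 := congrFun h 0
    have h1 : (x 0 + 2 * x 0 * x 2 + x 2) / 2 = 1/4 := congrFun h 1
    have h2 : (x 1 + 2 * x 1 * x 2 + x 2) / 2 = 1/2 := congrFun h 2
    have h3 : (x 0 - 2 * x 0 * x 1 + x 1) / 2 = 1/4 := congrFun h 3
    have h4 : (x 0 - 2 * x 0 * x 2 + x 2) / 2 = 1/4 := congrFun h 4
    have h5 : (x 1 - 2 * x 1 * x 2 + x 2) / 2 = 1/2 := congrFun h 5
    have e1 : x 0 * x 1 = 0 := by linarith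
    have e2 : x 0 + x 1 = 1/2 := by linarith
    have e3 : x 0 * x 2 = 0 := by linarith
    have e4 : x 0 + x 2 = 1/2 := by linarith
    have e5 : x 1 * x 2 = 0 := by linarith
    have e6 : x 1 + x 2 = 1 := by linarith
    have : x 1 = x 2 := by linarith
    nlinarith [e5, e6, this]
  refine ⟨hmem, hno, fun hsub => hno ?_⟩
  obtain ⟨x, hx, hphix⟩ := hsub hmem
  exact ⟨x, hx, hphix⟩
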